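/- Let A, B ∈ ℝ^{n×n} with A invertible. If the spectral radius ρ(|A⁻¹B|) < 1, then for every F ∈ ℝ^{n×n} the generalized absolute value matrix equation AX + B|X| = F has exactly one solution X ∈ ℝ^{n×n}. -/

import Mathlib

open Matrix

/-- Componentwise absolute value of a real matrix. -/
noncomputable def matAbs {n : ℕ} (M : Matrix (Fin n) (Fin n) ℝ) : Matrix (Fin n) (Fin n) ℝ :=
  fun i j => |M i j|

/-- Spectral radius of a real square matrix: the supremum of |λ| over its complex
eigenvalues (the complex spectrum of the matrix viewed over ℂ). -/
noncomputable def specRad {m : Type*} [Fintype m] [DecidableEq m]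
    (M : Matrix m m ℝ) : ℝ :=
  sSup ((fun z : ℂ => ‖z‖) '' spectrum ℂ (M.map Complex.ofReal))

open scoped NNReal ENNReal
open Filter Function

attribute [local instance] Matrix.linftyOpNormedRing Matrix.linftyOpNormedAlgebra

noncomputable local instance matComplR (n : ℕ) : CompleteSpace (Matrix (Fin n) (Fin n) ℝ) :=
  inferInstanceAs (CompleteSpace (Fin n → Fin n → ℝ))

noncomputable local instance matComplC (n : ℕ) : CompleteSpace (Matrix (Fin n) (Fin n) ℂ) :=
  inferInstanceAs (CompleteSpace (Fin n → Fin n → ℂ))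

/-- monotonicity of the `L∞` operator nnnorm under entrywise domination. -/
lemma gavme_nnnorm_le_of_entry {n : ℕ} (P Q : Matrix (Fin n) (Fin n) ℝ)
    (h : ∀ i j, |P i j| ≤ Q i j) : ‖P‖₊ ≤ ‖Q‖₊ := by
  rw [Matrix.linfty_opNNNorm_def, Matrix.linfty_opNNNorm_def]
  refine Finset.sup_le fun i _ => le_trans ?_ (Finset.le_sup (Finset.mem_univ i))
  refine Finset.sum_le_sum fun j _ => ?_
  have h0 : (0:ℝ) ≤ Q i j := le_trans (abs_nonneg _) (h i j)
  rw [← NNReal.coe_le_coe]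
  simpa [Real.norm_eq_abs, abs_of_nonneg h0] using h i j

lemma gavme_nnnorm_map_ofReal {n : ℕ} (P : Matrix (Fin n) (Fin n) ℝ) :
    ‖P.map (Complex.ofReal)‖₊ = ‖P‖₊ := by
  rw [Matrix.linfty_opNNNorm_def, Matrix.linfty_opNNNorm_def]
  congr 1
  funext i
  refine Finset.sum_congr rfl fun j _ => ?_
  simp [Matrix.map_apply]

/-- key analytic fact: spectral radius `< 1` gives a power with small `L∞` norm. -/
lemma gavme_exists_pow_nnnorm_lt_one {n : ℕ} (M : Matrix (Fin n) (Fin n) ℝ)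
    (hM : specRad M < 1) : ∃ k : ℕ, ‖M ^ k‖₊ < 1 := by
  set a : Matrix (Fin n) (Fin n) ℂ := M.map Complex.ofReal with ha
  have hbdd : BddAbove ((fun z : ℂ => ‖z‖) '' spectrum ℂ a) := by
    obtain ⟨C, hC⟩ := (Metric.isBounded_iff_subset_closedBall 0).mp
      (spectrum.isBounded (𝕜 := ℂ) a)
    refine ⟨C, ?_⟩
    rintro _ ⟨z, hz, rfl⟩
    have := hC hz
    simpa using mem_closedBall_zero_iff.mp this
  have hsr : spectralRadius ℂ a < 1 := by
    have hle : spectralRadius ℂ a ≤ ENNReal.ofReal (specRad M) := by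
      rw [spectralRadius]
      refine iSup₂_le fun z hz => ?_
      have h1 : ‖z‖ ≤ specRad M :=
        le_csSup hbdd ⟨z, hz, rfl⟩
      have : (‖z‖₊ : ℝ≥0∞) = ENNReal.ofReal ‖z‖ := (ofReal_norm z).symm
      rw [this]
      exact ENNReal.ofReal_le_ofReal (by simpa using h1)
    exact lt_of_le_of_lt hle (ENNReal.ofReal_lt_one.mpr hM)
  have htend := spectrum.pow_nnnorm_pow_one_div_tendsto_nhds_spectralRadius a
  have hev : ∀ᶠ k : ℕ in atTop, ((‖a ^ k‖₊ : ℝ≥0∞) ^ (1 / (k:ℝ))) < 1 :=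
    htend.eventually_lt_const hsr
  obtain ⟨N, hN⟩ := eventually_atTop.mp hev
  refine ⟨N + 1, ?_⟩
  have hk := hN (N + 1) (Nat.le_succ N)
  have hpos : (0:ℝ) < 1 / ((N + 1 : ℕ) : ℝ) := by positivity
  have hlt : (‖a ^ (N + 1)‖₊ : ℝ≥0∞) < 1 := by
    by_contra hge
    push_neg at hge
    have : (1:ℝ≥0∞) ≤ (‖a ^ (N + 1)‖₊ : ℝ≥0∞) ^ (1 / ((N + 1 : ℕ) : ℝ)) := by
      calc (1:ℝ≥0∞) = (1:ℝ≥0∞) ^ (1 / ((N + 1 : ℕ) : ℝ)) := (ENNReal.one_rpow _).symm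
        _ ≤ _ := ENNReal.rpow_le_rpow hge hpos.le
    exact absurd hk (not_lt.mpr this)
  have hmap : a ^ (N + 1) = (M ^ (N + 1)).map Complex.ofReal := by
    have : a = Complex.ofRealHom.mapMatrix M := rfl
    rw [this, ← map_pow]
    rfl
  rw [hmap, gavme_nnnorm_map_ofReal] at hlt
  exact_mod_cast hlt

/-- If A is invertible and ρ(|A⁻¹B|) < 1, then for every F the GAVME
AX + B|X| = F has exactly one solution. -/
theorem gavme_unique_solution {n : ℕ} (A B : Matrix (Fin n) (Fin n) ℝ)
    (hA : IsUnit A) (h : specRad (matAbs (A⁻¹ * B)) < 1) :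
    ∀ F : Matrix (Fin n) (Fin n) ℝ,
      ∃! X : Matrix (Fin n) (Fin n) ℝ, A * X + B * matAbs X = F := by
  intro F
  have hdet : IsUnit A.det := (Matrix.isUnit_iff_isUnit_det A).mp hA
  set C : Matrix (Fin n) (Fin n) ℝ := A⁻¹ * B with hC
  set M : Matrix (Fin n) (Fin n) ℝ := matAbs C with hMdef
  set T : Matrix (Fin n) (Fin n) ℝ → Matrix (Fin n) (Fin n) ℝ :=
    fun X => A⁻¹ * F - C * matAbs X with hT
  -- the equation is equivalent to being a fixed point of T
  have hiff : ∀ X, (A * X + B * matAbs X = F) ↔ T X = X := by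
    intro X
    have key2 : A * (X + C * matAbs X) = A * X + B * matAbs X := by
      rw [Matrix.mul_add, hC, Matrix.mul_assoc,
        Matrix.mul_nonsing_inv_cancel_left _ _ hdet]
    constructor
    · intro hX
      have keyF : A⁻¹ * F = X + C * matAbs X := by
        rw [← hX, ← key2, Matrix.nonsing_inv_mul_cancel_left _ _ hdet]
      show A⁻¹ * F - C * matAbs X = X
      rw [keyF]
      abel
    · intro hX
      have hX' : X = A⁻¹ * F - C * matAbs X := hX.symm
      have key : X + C * matAbs X = A⁻¹ * F := eq_sub_iff_add_eq.mp hX'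
      rw [← key2, key, Matrix.mul_nonsing_inv_cancel_left _ _ hdet]
  -- entrywise contraction estimate
  have habs : ∀ X Y : Matrix (Fin n) (Fin n) ℝ, ∀ i j,
      |(T X - T Y) i j| ≤ (M * matAbs (X - Y)) i j := by
    intro X Y i j
    have hTXY : T X - T Y = C * (matAbs Y - matAbs X) := by
      simp only [hT, sub_sub_sub_cancel_left, Matrix.mul_sub]
    rw [hTXY, Matrix.mul_apply, Matrix.mul_apply]
    refine (Finset.abs_sum_le_sum_abs _ _).trans (Finset.sum_le_sum fun l _ => ?_)
    rw [abs_mul]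
    have h2 : |(matAbs Y - matAbs X) l j| ≤ matAbs (X - Y) l j := by
      have h2' := abs_abs_sub_abs_le_abs_sub (Y l j) (X l j)
      exact h2'.trans (le_of_eq (abs_sub_comm _ _))
    exact mul_le_mul_of_nonneg_left h2 (abs_nonneg (C i l))
  -- iterate the estimate
  have hiter : ∀ k : ℕ, ∀ X Y : Matrix (Fin n) (Fin n) ℝ, ∀ i j,
      |(T^[k] X - T^[k] Y) i j| ≤ (M ^ k * matAbs (X - Y)) i j := by
    intro k
    induction k with
    | zero =>
      intro X Y i j
      simp only [Function.iterate_zero_apply, pow_zero, Matrix.one_mul]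
      exact le_of_eq rfl
    | succ k ih =>
      intro X Y i j
      rw [Function.iterate_succ_apply', Function.iterate_succ_apply']
      refine (habs _ _ i j).trans ?_
      have hmono : (M * matAbs (T^[k] X - T^[k] Y)) i j
          ≤ (M * (M ^ k * matAbs (X - Y))) i j := by
        rw [Matrix.mul_apply, Matrix.mul_apply]
        refine Finset.sum_le_sum fun l _ => ?_
        exact mul_le_mul_of_nonneg_left (ih X Y l j) (abs_nonneg _)
      refine hmono.trans (le_of_eq ?_)
      rw [← Matrix.mul_assoc, ← pow_succ']
  -- get a contracting iterate
  obtain ⟨k, hk⟩ := gavme_exists_pow_nnnorm_lt_one M h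
  have hlip : LipschitzWith ‖M ^ k‖₊ (T^[k]) := by
    refine LipschitzWith.of_dist_le_mul fun X Y => ?_
    have h1 : ‖T^[k] X - T^[k] Y‖₊ ≤ ‖M ^ k * matAbs (X - Y)‖₊ :=
      gavme_nnnorm_le_of_entry _ _ (fun i j => hiter k X Y i j)
    have h2 : ‖M ^ k * matAbs (X - Y)‖₊ ≤ ‖M ^ k‖₊ * ‖matAbs (X - Y)‖₊ :=
      Matrix.linfty_opNNNorm_mul _ _
    have h3 : ‖matAbs (X - Y)‖₊ = ‖X - Y‖₊ := by
      rw [Matrix.linfty_opNNNorm_def, Matrix.linfty_opNNNorm_def]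
      congr 1
      funext i
      refine Finset.sum_congr rfl fun j _ => ?_
      exact Real.nnnorm_abs _
    rw [dist_eq_norm, dist_eq_norm]
    have := (h1.trans h2)
    rw [h3] at this
    exact_mod_cast this
  have hcontr : ContractingWith ‖M ^ k‖₊ (T^[k]) := ⟨hk, hlip⟩
  haveI : Nonempty (Matrix (Fin n) (Fin n) ℝ) := ⟨0⟩
  set x := ContractingWith.fixedPoint (T^[k]) hcontr with hx
  have hxfix : Function.IsFixedPt (T^[k]) x := hcontr.fixedPoint_isFixedPt
  have hTx : T x = x := by
    have hfix2 : Function.IsFixedPt (T^[k]) (T x) := by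
      show T^[k] (T x) = T x
      rw [← Function.iterate_succ_apply, Function.iterate_succ_apply', hxfix.eq]
    exact hcontr.fixedPoint_unique' hfix2 hxfix
  refine ⟨x, (hiff x).mpr hTx, fun y hy => ?_⟩
  have hyfix : Function.IsFixedPt T y := (hiff y).mp hy
  exact hcontr.fixedPoint_unique' (hyfix.iterate k) hxfix
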